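/- Let f₁, f₂ ∈ L₁(μ) be nonnegative with ‖f₁ + f₂‖₁ ≤ 1 and 1 - ε² ≤ ‖f₁ - f₂‖₁ for some 0 < ε < 1/5. With G₁ = {f₁ - f₂ > (1-ε)(f₁+f₂)} and G₂ = {f₂ - f₁ > (1-ε)(f₁+f₂)}, one has ‖f₁·χ_{G₁} + f₂·χ_{G₂}‖₁ ≥ 1 - ε² - 4ε > 1 - 5ε > 0. -/

import Mathlib

open MeasureTheory Set

/-- With `G₁ = {f₁ - f₂ > (1-ε)(f₁+f₂)}`, `G₂ = {f₂ - f₁ > (1-ε)(f₁+f₂)}`, nonnegative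
`f₁, f₂ ∈ L₁(μ)`, `‖f₁+f₂‖₁ ≤ 1` and `1 - ε² ≤ ‖f₁-f₂‖₁`, one has
`‖f₁·χ_{G₁} + f₂·χ_{G₂}‖₁ ≥ 1 - ε² - 4ε > 1 - 5ε > 0`. -/
theorem norm_restricted_sum_large
    {α : Type*} [MeasurableSpace α] (μ : Measure α)
    (f₁ f₂ : α → ℝ) (hf₁ : Integrable f₁ μ) (hf₂ : Integrable f₂ μ)
    (hf₁0 : 0 ≤ᵐ[μ] f₁) (hf₂0 : 0 ≤ᵐ[μ] f₂)
    (ε : ℝ) (hε0 : 0 < ε) (hε : ε < 1/5)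
    (hsum : ∫ t, |f₁ t + f₂ t| ∂μ ≤ 1)
    (hdiff : 1 - ε ^ 2 ≤ ∫ t, |f₁ t - f₂ t| ∂μ) :
    (∫ t, |indicator {t | (1 - ε) * (f₁ t + f₂ t) < f₁ t - f₂ t} f₁ t
        + indicator {t | (1 - ε) * (f₁ t + f₂ t) < f₂ t - f₁ t} f₂ t| ∂μ)
      ≥ 1 - ε ^ 2 - 4 * ε
    ∧ 1 - ε ^ 2 - 4 * ε > 1 - 5 * ε ∧ 1 - 5 * ε > 0 := by
  have hε1 : ε < 1 := by linarith
  set G₁ : Set α := {t | (1 - ε) * (f₁ t + f₂ t) < f₁ t - f₂ t} with hG₁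
  set G₂ : Set α := {t | (1 - ε) * (f₁ t + f₂ t) < f₂ t - f₁ t} with hG₂
  set A : α → ℝ := fun t => indicator G₁ f₁ t + indicator G₂ f₂ t with hA
  -- measurable versions
  obtain ⟨g₁, hg₁m, heq₁⟩ := hf₁.1
  obtain ⟨g₂, hg₂m, heq₂⟩ := hf₂.1
  have hg₁ : Measurable g₁ := hg₁m.measurable
  have hg₂ : Measurable g₂ := hg₂m.measurable
  have hS₁ : MeasurableSet {t | (1 - ε) * (g₁ t + g₂ t) < g₁ t - g₂ t} :=
    measurableSet_lt (measurable_const.mul (hg₁.add hg₂)) (hg₁.sub hg₂)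
  have hS₂ : MeasurableSet {t | (1 - ε) * (g₁ t + g₂ t) < g₂ t - g₁ t} :=
    measurableSet_lt (measurable_const.mul (hg₁.add hg₂)) (hg₂.sub hg₁)
  have hAB : A =ᵐ[μ] fun t =>
      indicator {t | (1 - ε) * (g₁ t + g₂ t) < g₁ t - g₂ t} g₁ t
      + indicator {t | (1 - ε) * (g₁ t + g₂ t) < g₂ t - g₁ t} g₂ t := by
    filter_upwards [heq₁, heq₂] with t h1 h2
    simp only [hA, hG₁, hG₂, Set.indicator_apply, Set.mem_setOf_eq, h1, h2]
  have hAmeas : AEStronglyMeasurable A μ := by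
    refine AEStronglyMeasurable.congr ?_ hAB.symm
    exact ((hg₁m.indicator hS₁).add (hg₂m.indicator hS₂)).aestronglyMeasurable
  have hintA : Integrable A μ := by
    refine Integrable.mono (hf₁.abs.add hf₂.abs) hAmeas ?_
    filter_upwards with t
    simp only [hA, Real.norm_eq_abs]
    have h1 : |indicator G₁ f₁ t| ≤ |f₁ t| := by
      by_cases h : t ∈ G₁ <;> simp [Set.indicator_apply, h, abs_nonneg]
    have h2 : |indicator G₂ f₂ t| ≤ |f₂ t| := by
      by_cases h : t ∈ G₂ <;> simp [Set.indicator_apply, h, abs_nonneg]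
    have hstep : |indicator G₁ f₁ t + indicator G₂ f₂ t| ≤ |f₁ t| + |f₂ t| :=
      le_trans (abs_add_le _ _) (add_le_add h1 h2)
    exact le_trans hstep (le_abs_self _)
  -- key pointwise inequality
  have key : ∀ᵐ t ∂μ, |f₁ t - f₂ t| ≤ ε * |A t| + (1 - ε) * |f₁ t + f₂ t| := by
    filter_upwards [hf₁0, hf₂0] with t ha' hb'
    set a := f₁ t with haa
    set b := f₂ t with hbb
    have ha : (0:ℝ) ≤ a := ha'
    have hb : (0:ℝ) ≤ b := hb'
    have hprod : (0:ℝ) ≤ (1 - ε) * (a + b) :=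
      mul_nonneg (by linarith) (by linarith)
    have hea : (0:ℝ) ≤ ε * a := mul_nonneg hε0.le ha
    have heb : (0:ℝ) ≤ ε * b := mul_nonneg hε0.le hb
    have habs : |a + b| = a + b := abs_of_nonneg (by linarith)
    by_cases h1 : t ∈ G₁
    · have h1' : (1 - ε) * (a + b) < a - b := h1
      have h2 : t ∉ G₂ := by
        intro h2
        have h2' : (1 - ε) * (a + b) < b - a := h2
        nlinarith
      have hAt : A t = a := by simp [hA, Set.indicator_of_mem h1, Set.indicator_of_notMem h2, haa]
      rw [hAt, habs, abs_of_nonneg ha, abs_of_nonneg (by nlinarith : (0:ℝ) ≤ a - b)]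
      nlinarith
    · by_cases h2 : t ∈ G₂
      · have h2' : (1 - ε) * (a + b) < b - a := h2
        have hAt : A t = b := by simp [hA, Set.indicator_of_notMem h1, Set.indicator_of_mem h2, hbb]
        rw [hAt, habs, abs_of_nonneg hb, abs_of_nonpos (by nlinarith : a - b ≤ 0)]
        nlinarith
      · have h1' : ¬ (1 - ε) * (a + b) < a - b := h1
        have h2' : ¬ (1 - ε) * (a + b) < b - a := h2
        push_neg at h1' h2'
        have hAt : A t = 0 := by
          simp [hA, Set.indicator_of_notMem h1, Set.indicator_of_notMem h2]
        rw [hAt, habs]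
        simp only [abs_zero, mul_zero, zero_add]
        rcases abs_cases (a - b) with ⟨he, _⟩ | ⟨he, _⟩ <;> rw [he] <;> linarith
  have hfadd : Integrable (fun t => |f₁ t + f₂ t|) μ := (hf₁.add hf₂).abs
  have hfsub : Integrable (fun t => |f₁ t - f₂ t|) μ := (hf₁.sub hf₂).abs
  have hintRHS : Integrable (fun t => ε * |A t| + (1 - ε) * |f₁ t + f₂ t|) μ :=
    (hintA.abs.const_mul ε).add (hfadd.const_mul (1 - ε))
  have hmono : ∫ t, |f₁ t - f₂ t| ∂μ ≤ ∫ t, (ε * |A t| + (1 - ε) * |f₁ t + f₂ t|) ∂μ :=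
    integral_mono_ae hfsub hintRHS key
  rw [integral_add (hintA.abs.const_mul ε) (hfadd.const_mul (1 - ε)),
    integral_const_mul, integral_const_mul] at hmono
  have hI : ∫ t, |A t| ∂μ ≥ 1 - ε := by nlinarith
  have hfinal : ∫ t, |A t| ∂μ ≥ 1 - ε ^ 2 - 4 * ε :=
    le_trans (by nlinarith : 1 - ε ^ 2 - 4 * ε ≤ 1 - ε) hI
  exact ⟨hfinal, by nlinarith, by linarith⟩
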